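/- arXiv:1508.04526 — 9 statements merged into one kernel-verified Lean document; each statement's English description precedes it below -/
import Mathlib

section
/- Let D_max ∈ (0, ∞], let R_s : (0, D_max) → (0, ∞) be a twice continuously differentiable bijection onto (0, ∞) with R_s′(D) < 0 and R_s″(D) > 0 for all D ∈ (0, D_max), and let R_c : (0, ∞) → (0, ∞) be twice continuously differentiable with R_c′(p) > 0 and R_c″(p) < 0 for all p > 0. For p, q > 0 define D(p, q) as the unique d ∈ (0, D_max) satisfying R_s(d) = R_c(p)/q. Then the function D†(p, q) := q · D(p, q) is convex on the set {(p, q) : p > 0, q > 0}. -/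
open Set

lemma combo_pos {a b x y : ℝ} (ha : 0 ≤ a) (hb : 0 ≤ b) (hab : a + b = 1)
    (hx : 0 < x) (hy : 0 < y) : 0 < a * x + b * y := by
  rcases eq_or_lt_of_le ha with h | h
  · have hb1 : b = 1 := by linarith
    rw [← h, hb1]; simpa using hy
  · nlinarith [mul_nonneg hb hy.le]

lemma aux_main (S : Set ℝ) (hSopen : IsOpen S) (hSconv : Convex ℝ S)
    (hSpos : ∀ d ∈ S, 0 < d)
    (hSout : ∀ c : ℝ, 0 < c → c ∉ S → ∀ d ∈ S, d ≤ c)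
    (Rs Rc : ℝ → ℝ)
    (hRsSmooth : ContDiffOn ℝ 2 Rs S)
    (hRs' : ∀ d ∈ S, deriv Rs d < 0)
    (hRs'' : ∀ d ∈ S, deriv (deriv Rs) d > 0)
    (hRcSmooth : ContDiffOn ℝ 2 Rc (Set.Ioi (0 : ℝ)))
    (hRc'' : ∀ p : ℝ, 0 < p → deriv (deriv Rc) p < 0)
    (D : ℝ → ℝ → ℝ)
    (hD : ∀ p q : ℝ, 0 < p → 0 < q → D p q ∈ S ∧ Rs (D p q) = Rc p / q) :
    ConvexOn ℝ (Set.Ioi (0 : ℝ) ×ˢ Set.Ioi (0 : ℝ))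
      (fun x : ℝ × ℝ => x.2 * D x.1 x.2) := by
  have hRsDiff : DifferentiableOn ℝ Rs S := hRsSmooth.differentiableOn (by norm_num)
  have hRsDeriv : ContDiffOn ℝ 1 (deriv Rs) S :=
    hRsSmooth.deriv_of_isOpen hSopen (by norm_num)
  have hRsConv : ConvexOn ℝ S Rs := by
    refine convexOn_of_deriv2_nonneg hSconv hRsSmooth.continuousOn ?_ ?_ ?_
    · rw [hSopen.interior_eq]; exact hRsDiff
    · rw [hSopen.interior_eq]; exact hRsDeriv.differentiableOn (by norm_num)
    · intro x hx
      rw [hSopen.interior_eq] at hx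
      exact (hRs'' x hx).le
  have hRsAnti : StrictAntiOn Rs S := by
    refine strictAntiOn_of_deriv_neg hSconv hRsSmooth.continuousOn ?_
    intro x hx
    rw [hSopen.interior_eq] at hx
    exact hRs' x hx
  have hRcConc : ConcaveOn ℝ (Set.Ioi (0 : ℝ)) Rc := by
    refine concaveOn_of_deriv2_nonpos (convex_Ioi 0) hRcSmooth.continuousOn ?_ ?_ ?_
    · rw [interior_Ioi]; exact hRcSmooth.differentiableOn (by norm_num)
    · rw [interior_Ioi]
      exact (hRcSmooth.deriv_of_isOpen (m := 1) isOpen_Ioi (by norm_num)).differentiableOn (by norm_num)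
    · intro x hx
      rw [interior_Ioi] at hx
      exact (hRc'' x hx).le
  constructor
  · exact (convex_Ioi 0).prod (convex_Ioi 0)
  rintro ⟨p1, q1⟩ ⟨hp1, hq1⟩ ⟨p2, q2⟩ ⟨hp2, hq2⟩ a b ha hb hab
  simp only [Prod.smul_mk, Prod.mk_add_mk, smul_eq_mul] at *
  set p := a * p1 + b * p2 with hp
  set q := a * q1 + b * q2 with hq
  obtain ⟨hd1S, hd1Eq⟩ := hD p1 q1 hp1 hq1
  obtain ⟨hd2S, hd2Eq⟩ := hD p2 q2 hp2 hq2
  have hppos : 0 < p := combo_pos ha hb hab hp1 hp2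
  have hqpos : 0 < q := combo_pos ha hb hab hq1 hq2
  obtain ⟨hdS, hdEq⟩ := hD p q hppos hqpos
  set d1 := D p1 q1
  set d2 := D p2 q2
  set dst := D p q
  have hd1pos : 0 < d1 := hSpos _ hd1S
  have hd2pos : 0 < d2 := hSpos _ hd2S
  set c : ℝ := (a * q1 * d1 + b * q2 * d2) / q with hc
  set lam : ℝ := a * q1 / q with hlam
  set mu : ℝ := b * q2 / q with hmu
  have hq0 : q ≠ 0 := ne_of_gt hqpos
  have hq10 : q1 ≠ 0 := ne_of_gt hq1
  have hq20 : q2 ≠ 0 := ne_of_gt hq2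
  have hlamnn : 0 ≤ lam := div_nonneg (mul_nonneg ha (le_of_lt hq1)) hqpos.le
  have hmunn : 0 ≤ mu := div_nonneg (mul_nonneg hb (le_of_lt hq2)) hqpos.le
  have hlm : lam + mu = 1 := by
    rw [hlam, hmu]; field_simp; linarith [hq]
  have hceq : c = lam * d1 + mu * d2 := by
    rw [hc, hlam, hmu]; field_simp; try ring
  have hcpos : 0 < c := by
    rw [hceq]; exact combo_pos hlamnn hmunn hlm hd1pos hd2pos
  have hdstc : dst ≤ c := by
    by_cases hcS : c ∈ S
    · have key : Rs c ≤ Rs dst := by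
        have h1 : Rs c ≤ lam * Rs d1 + mu * Rs d2 := by
          rw [hceq]
          exact hRsConv.2 hd1S hd2S hlamnn hmunn hlm
        have h2 : lam * Rs d1 + mu * Rs d2 = (a * Rc p1 + b * Rc p2) / q := by
          rw [hd1Eq, hd2Eq, hlam, hmu]
          field_simp
        have h3 : a * Rc p1 + b * Rc p2 ≤ Rc p := by
          have := hRcConc.2 (mem_Ioi.mpr hp1) (mem_Ioi.mpr hp2) ha hb hab
          simpa using this
        have h4 : (a * Rc p1 + b * Rc p2) / q ≤ Rc p / q := by gcongr
        rw [hdEq]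
        linarith [h1, h2 ▸ h1]
      by_contra hcon
      push_neg at hcon
      exact absurd (hRsAnti hcS hdS hcon) (not_lt.mpr key)
    · exact hSout c hcpos hcS dst hdS
  have : q * dst ≤ q * c := by nlinarith
  calc q * dst ≤ q * c := this
    _ = a * q1 * d1 + b * q2 * d2 := by rw [hc]; field_simp
    _ = a * (q1 * d1) + b * (q2 * d2) := by ring


/-- With `Dmax ∈ (0, ∞]` (encoded as an `EReal`), a rate-distortion
function `Rs` that is a twice continuously differentiable bijection from
`(0, Dmax)` onto `(0, ∞)` with `Rs' < 0`, `Rs'' > 0`, and a channel rate `Rc`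
twice continuously differentiable on `(0, ∞)` with `Rc' > 0`, `Rc'' < 0`,
the weighted distortion `D†(p, q) = q · D(p, q)`, where `D(p, q)` is the unique
`d ∈ (0, Dmax)` with `Rs d = Rc p / q`, is convex on `{(p, q) : p > 0, q > 0}`. -/
theorem stmt0
    (Dmax : EReal) (hDmax : 0 < Dmax)
    (S : Set ℝ) (hS : S = {d : ℝ | 0 < d ∧ (d : EReal) < Dmax})
    (Rs Rc : ℝ → ℝ)
    (hRsSmooth : ContDiffOn ℝ 2 Rs S)
    (hRsBij : Set.BijOn Rs S (Set.Ioi (0 : ℝ)))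
    (hRs' : ∀ d ∈ S, deriv Rs d < 0)
    (hRs'' : ∀ d ∈ S, deriv (deriv Rs) d > 0)
    (hRcSmooth : ContDiffOn ℝ 2 Rc (Set.Ioi (0 : ℝ)))
    (hRcPos : ∀ p : ℝ, 0 < p → 0 < Rc p)
    (hRc' : ∀ p : ℝ, 0 < p → 0 < deriv Rc p)
    (hRc'' : ∀ p : ℝ, 0 < p → deriv (deriv Rc) p < 0)
    (D : ℝ → ℝ → ℝ)
    (hD : ∀ p q : ℝ, 0 < p → 0 < q → D p q ∈ S ∧ Rs (D p q) = Rc p / q) :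
    ConvexOn ℝ (Set.Ioi (0 : ℝ) ×ˢ Set.Ioi (0 : ℝ))
      (fun x : ℝ × ℝ => x.2 * D x.1 x.2) := by
  have hScase : S = Set.Ioi (0 : ℝ) ∨ ∃ t : ℝ, 0 < t ∧ S = Set.Ioo (0 : ℝ) t := by
    rcases eq_top_or_lt_top Dmax with htop | hlt
    · left
      ext d
      simp [hS, htop, EReal.coe_lt_top]
    · right
      have hbot : Dmax ≠ ⊥ := by
        intro h
        rw [h] at hDmax
        exact absurd hDmax (by simp)
      lift Dmax to ℝ using ⟨hlt.ne, hbot⟩ with t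
      refine ⟨t, ?_, ?_⟩
      · exact_mod_cast hDmax
      · ext d
        simp only [hS, Set.mem_setOf_eq, Set.mem_Ioo, EReal.coe_lt_coe_iff]
  rcases hScase with hcase | ⟨t, ht, hcase⟩
  · subst hcase
    refine aux_main (Set.Ioi 0) isOpen_Ioi (convex_Ioi 0) (fun d hd => hd) ?_
      Rs Rc hRsSmooth hRs' hRs'' hRcSmooth hRc'' D hD
    intro c hc hcS d hd
    exact absurd hc hcS
  · subst hcase
    refine aux_main (Set.Ioo 0 t) isOpen_Ioo (convex_Ioo 0 t) (fun d hd => hd.1) ?_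
      Rs Rc hRsSmooth hRs' hRs'' hRcSmooth hRc'' D hD
    intro c hc hcS d hd
    have : t ≤ c := by
      by_contra h
      push_neg at h
      exact hcS ⟨hc, h⟩
    linarith [hd.2]
end

section
/- Let 0 < D_max < ∞ and 0 < R_th < ∞, let R_s : (0, D_max) → (0, R_th) be a twice continuously differentiable bijection onto (0, R_th) with R_s′(D) < 0 and R_s″(D) > 0 for all D ∈ (0, D_max), R_s(D) → R_th as D → 0⁺ and R_s(D) → 0 as D → D_max⁻, and let R_c : (0, ∞) → (0, ∞) be twice continuously differentiable with R_c′(p) > 0 and R_c″(p) < 0 for all p > 0. For p, q > 0 define D(p, q) := 0 if R_c(p)/q ≥ R_th, and otherwise D(p, q) is the unique d ∈ (0, D_max) with R_s(d) = R_c(p)/q. Then the function D†(p, q) := q · D(p, q) is convex on the set {(p, q) : p > 0, q > 0}. -/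
open Set Filter

set_option maxHeartbeats 1000000

/-- Chord inequality for a convex function on `(0, Dmax)` tending to `Rth` at `0⁺`:
the convexity inequality extends to the endpoint `0` with value `Rth`. -/
lemma chord_aux (Rs : ℝ → ℝ) (Dmax Rth : ℝ)
    (hconv : ConvexOn ℝ (Set.Ioo 0 Dmax) Rs)
    (hRs0 : Tendsto Rs (nhdsWithin 0 (Set.Ioi 0)) (nhds Rth))
    (d2 : ℝ) (hd2 : d2 ∈ Set.Ioo 0 Dmax) (μ ν : ℝ)
    (hμ : 0 < μ) (hν : 0 < ν) (hμν : μ + ν = 1) :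
    Rs (ν * d2) ≤ μ * Rth + ν * Rs d2 := by
  obtain ⟨hd2a, hd2b⟩ := hd2
  set x := ν * d2 with hxdef
  have hx0 : 0 < x := mul_pos hν hd2a
  have hxd2 : x < d2 := by nlinarith
  have hev : ∀ ε ∈ Set.Ioo (0:ℝ) x,
      Rs x ≤ (d2 - x)/(d2 - ε) * Rs ε + (1 - (d2 - x)/(d2 - ε)) * Rs d2 := by
    rintro ε ⟨hε0, hεx⟩
    have hεd2 : ε < d2 := hεx.trans hxd2
    have hden : 0 < d2 - ε := by linarith
    set lam := (d2 - x)/(d2 - ε) with hlamdef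
    have hl0 : 0 ≤ lam := div_nonneg (by linarith) hden.le
    have hl1 : lam ≤ 1 := (div_le_one hden).2 (by linarith)
    have hmul : lam * (d2 - ε) = d2 - x := div_mul_cancel₀ _ hden.ne'
    have hcomb : lam * ε + (1 - lam) * d2 = x := by nlinarith [hmul]
    have hw1 : (0:ℝ) ≤ 1 - lam := by linarith
    have hw2 : lam + (1 - lam) = 1 := by ring
    have hcx := hconv.2 (show ε ∈ Set.Ioo (0:ℝ) Dmax from ⟨hε0, hεd2.trans hd2b⟩)
      (show d2 ∈ Set.Ioo (0:ℝ) Dmax from ⟨hd2a, hd2b⟩) hl0 hw1 hw2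
    simp only [smul_eq_mul] at hcx
    rw [hcomb] at hcx
    exact hcx
  have hlam : Tendsto (fun ε : ℝ => (d2 - x)/(d2 - ε)) (nhdsWithin 0 (Set.Ioi 0)) (nhds μ) := by
    have h1 : Tendsto (fun ε : ℝ => (d2 - x)/(d2 - ε)) (nhds 0) (nhds ((d2 - x)/(d2 - 0))) :=
      tendsto_const_nhds.div (tendsto_const_nhds.sub tendsto_id) (by simpa using hd2a.ne')
    have h2 : (d2 - x)/(d2 - 0) = μ := by
      rw [sub_zero, hxdef]
      field_simp
      nlinarith
    rw [h2] at h1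
    exact h1.mono_left nhdsWithin_le_nhds
  have hg : Tendsto (fun ε : ℝ => (d2 - x)/(d2 - ε) * Rs ε + (1 - (d2 - x)/(d2 - ε)) * Rs d2)
      (nhdsWithin 0 (Set.Ioi 0)) (nhds (μ * Rth + (1 - μ) * Rs d2)) :=
    (hlam.mul hRs0).add ((tendsto_const_nhds.sub hlam).mul tendsto_const_nhds)
  have hle : Rs x ≤ μ * Rth + (1 - μ) * Rs d2 := by
    refine ge_of_tendsto hg ?_
    filter_upwards [Ioo_mem_nhdsGT_of_mem (show (0:ℝ) ∈ Set.Ico 0 x from ⟨le_refl 0, hx0⟩)]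
      with ε hε
    exact hev ε hε
  have : (1 : ℝ) - μ = ν := by linarith
  rwa [this] at hle

/-- With `0 < Dmax < ∞` and `0 < Rth < ∞`, a rate-distortion
function `Rs` that is a twice continuously differentiable bijection from
`(0, Dmax)` onto `(0, Rth)` with `Rs' < 0`, `Rs'' > 0`, `Rs → Rth` at `0⁺`,
`Rs → 0` at `Dmax⁻`, and a channel rate `Rc` twice continuously differentiable
on `(0, ∞)` with `Rc' > 0`, `Rc'' < 0`, the weighted distortion
`D†(p,q) = q · D(p,q)` — where `D(p,q) = 0` when `Rc p / q ≥ Rth` and otherwise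
is the unique `d ∈ (0, Dmax)` with `Rs d = Rc p / q` — is convex on
`{(p, q) : p > 0, q > 0}`. -/
theorem stmt1
    (Dmax Rth : ℝ) (hDmax : 0 < Dmax) (hRth : 0 < Rth)
    (Rs Rc : ℝ → ℝ)
    (hRsSmooth : ContDiffOn ℝ 2 Rs (Set.Ioo 0 Dmax))
    (hRsBij : Set.BijOn Rs (Set.Ioo 0 Dmax) (Set.Ioo 0 Rth))
    (hRs' : ∀ d ∈ Set.Ioo 0 Dmax, deriv Rs d < 0)
    (hRs'' : ∀ d ∈ Set.Ioo 0 Dmax, deriv (deriv Rs) d > 0)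
    (hRs0 : Tendsto Rs (nhdsWithin 0 (Set.Ioi 0)) (nhds Rth))
    (hRsD : Tendsto Rs (nhdsWithin Dmax (Set.Iio Dmax)) (nhds 0))
    (hRcSmooth : ContDiffOn ℝ 2 Rc (Set.Ioi (0 : ℝ)))
    (hRcPos : ∀ p : ℝ, 0 < p → 0 < Rc p)
    (hRc' : ∀ p : ℝ, 0 < p → 0 < deriv Rc p)
    (hRc'' : ∀ p : ℝ, 0 < p → deriv (deriv Rc) p < 0)
    (D : ℝ → ℝ → ℝ)
    (hDzero : ∀ p q : ℝ, 0 < p → 0 < q → Rth ≤ Rc p / q → D p q = 0)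
    (hDpos : ∀ p q : ℝ, 0 < p → 0 < q → Rc p / q < Rth →
      D p q ∈ Set.Ioo 0 Dmax ∧ Rs (D p q) = Rc p / q) :
    ConvexOn ℝ (Set.Ioi (0 : ℝ) ×ˢ Set.Ioi (0 : ℝ))
      (fun x : ℝ × ℝ => x.2 * D x.1 x.2) := by
  -- Convexity of Rs on (0, Dmax)
  have hconv : ConvexOn ℝ (Set.Ioo 0 Dmax) Rs := by
    refine (strictConvexOn_of_deriv2_pos (convex_Ioo _ _) hRsSmooth.continuousOn ?_).convexOn
    intro x hx
    rw [interior_Ioo] at hx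
    exact hRs'' x hx
  -- Strict antitonicity of Rs
  have hanti : StrictAntiOn Rs (Set.Ioo 0 Dmax) := by
    refine strictAntiOn_of_deriv_neg (convex_Ioo _ _) hRsSmooth.continuousOn ?_
    rw [interior_Ioo]; exact hRs'
  -- Concavity of Rc on (0, ∞)
  have hconc : ConcaveOn ℝ (Set.Ioi 0) Rc := by
    refine (strictConcaveOn_of_deriv2_neg (convex_Ioi _) hRcSmooth.continuousOn ?_).concaveOn
    intro x hx
    rw [interior_Ioi] at hx
    exact hRc'' x hx
  -- D is nonnegative
  have hDnn : ∀ p q : ℝ, 0 < p → 0 < q → 0 ≤ D p q := by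
    intro p q hp hq
    rcases lt_or_ge (Rc p / q) Rth with h | h
    · exact (hDpos p q hp hq h).1.1.le
    · rw [hDzero p q hp hq h]
  refine ⟨(convex_Ioi 0).prod (convex_Ioi 0), ?_⟩
  rintro ⟨p1, q1⟩ ⟨hp1, hq1⟩ ⟨p2, q2⟩ ⟨hp2, hq2⟩ a b ha hb hab
  simp only [Set.mem_Ioi] at hp1 hq1 hp2 hq2
  obtain rfl | ha0 := ha.eq_or_lt
  · have hb1 : b = 1 := by linarith
    subst hb1; norm_num
  obtain rfl | hb0 := hb.eq_or_lt
  · have ha1 : a = 1 := by linarith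
    subst ha1; norm_num
  simp only [Prod.smul_mk, Prod.mk_add_mk, smul_eq_mul]
  set p := a * p1 + b * p2 with hpdef
  set q := a * q1 + b * q2 with hqdef
  have hp : 0 < p := by positivity
  have hq : 0 < q := by positivity
  set d1 := D p1 q1 with hd1def
  set d2 := D p2 q2 with hd2def
  set d := D p q with hddef
  -- the goal
  show q * d ≤ a * (q1 * d1) + b * (q2 * d2)
  rcases lt_or_ge (Rc p / q) Rth with hc | hc
  swap
  · rw [show d = 0 from hDzero p q hp hq hc]
    have h1 : 0 ≤ q1 * d1 := mul_nonneg hq1.le (hDnn p1 q1 hp1 hq1)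
    have h2 : 0 ≤ q2 * d2 := mul_nonneg hq2.le (hDnn p2 q2 hp2 hq2)
    nlinarith
  obtain ⟨hdmem, hdeq⟩ := hDpos p q hp hq hc
  -- concavity bound for Rc
  have hRcconc : a * Rc p1 + b * Rc p2 ≤ Rc p := by
    have := hconc.2 (Set.mem_Ioi.2 hp1) (Set.mem_Ioi.2 hp2) ha hb hab
    simpa [smul_eq_mul] using this
  set S := a * (q1 * d1) + b * (q2 * d2) with hSdef
  set μ := a * q1 / q with hμdef
  set ν := b * q2 / q with hνdef
  have hμ0 : 0 < μ := by positivity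
  have hν0 : 0 < ν := by positivity
  have hμν : μ + ν = 1 := by
    rw [hμdef, hνdef, ← add_div, hqdef, div_self hq.ne']
  rcases le_or_gt (q * Dmax) S with hS | hS
  · nlinarith [hdmem.2]
  -- final combination step
  have main : Rs (S / q) ≤ Rc p / q → 0 < S → q * d ≤ S := by
    intro hle hS0
    have hmem : S / q ∈ Set.Ioo 0 Dmax := ⟨by positivity, by rw [div_lt_iff₀ hq]; nlinarith⟩
    have hdle : d ≤ S / q := by
      by_contra hcon
      push_neg at hcon
      have hlt := hanti hmem hdmem hcon
      rw [hdeq] at hlt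
      linarith
    have h2 : q * (S / q) = S := by field_simp
    nlinarith [mul_le_mul_of_nonneg_left hdle hq.le]
  -- concavity bound for the weighted Rc sum
  have hsum : μ * (Rc p1 / q1) + ν * (Rc p2 / q2) ≤ Rc p / q := by
    have e1 : μ * (Rc p1 / q1) = a * Rc p1 / q := by
      rw [hμdef]; field_simp
    have e2 : ν * (Rc p2 / q2) = b * Rc p2 / q := by
      rw [hνdef]; field_simp
    rw [e1, e2, ← add_div]
    exact (div_le_div_iff_of_pos_right hq).2 hRcconc
  rcases lt_or_ge (Rc p1 / q1) Rth with h1 | h1 <;>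
    rcases lt_or_ge (Rc p2 / q2) Rth with h2 | h2
  · -- both d1, d2 positive
    obtain ⟨hm1, he1⟩ := hDpos p1 q1 hp1 hq1 h1
    obtain ⟨hm2, he2⟩ := hDpos p2 q2 hp2 hq2 h2
    have hS0 : 0 < S := by
      rw [hSdef]
      have := hm1.1; have := hm2.1
      positivity
    have heq : S / q = μ * d1 + ν * d2 := by
      rw [hSdef, hμdef, hνdef]; field_simp
    have hcc := hconv.2 hm1 hm2 hμ0.le hν0.le hμν
    simp only [smul_eq_mul] at hcc
    refine main ?_ hS0
    rw [heq]
    calc Rs (μ * d1 + ν * d2) ≤ μ * Rs d1 + ν * Rs d2 := hcc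
      _ = μ * (Rc p1 / q1) + ν * (Rc p2 / q2) := by rw [he1, he2]
      _ ≤ Rc p / q := hsum
  · -- d1 positive, d2 = 0
    obtain ⟨hm1, he1⟩ := hDpos p1 q1 hp1 hq1 h1
    have hz2 : d2 = 0 := hDzero p2 q2 hp2 hq2 h2
    have hS0 : 0 < S := by
      rw [hSdef, hz2]
      have := hm1.1
      have : 0 < a * (q1 * d1) := by positivity
      nlinarith
    have heq : S / q = μ * d1 := by
      rw [hSdef, hz2, hμdef]; field_simp; ring
    have hch := chord_aux Rs Dmax Rth hconv hRs0 d1 hm1 ν μ hν0 hμ0 (by linarith)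
    refine main ?_ hS0
    rw [heq]
    calc Rs (μ * d1) ≤ ν * Rth + μ * Rs d1 := hch
      _ ≤ ν * (Rc p2 / q2) + μ * (Rc p1 / q1) := by
          rw [he1]
          nlinarith [mul_le_mul_of_nonneg_left h2 hν0.le]
      _ ≤ Rc p / q := by linarith [hsum]
  · -- d1 = 0, d2 positive
    obtain ⟨hm2, he2⟩ := hDpos p2 q2 hp2 hq2 h2
    have hz1 : d1 = 0 := hDzero p1 q1 hp1 hq1 h1
    have hS0 : 0 < S := by
      rw [hSdef, hz1]
      have := hm2.1
      have : 0 < b * (q2 * d2) := by positivity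
      nlinarith
    have heq : S / q = ν * d2 := by
      rw [hSdef, hz1, hνdef]; field_simp; ring
    have hch := chord_aux Rs Dmax Rth hconv hRs0 d2 hm2 μ ν hμ0 hν0 hμν
    refine main ?_ hS0
    rw [heq]
    calc Rs (ν * d2) ≤ μ * Rth + ν * Rs d2 := hch
      _ ≤ μ * (Rc p1 / q1) + ν * (Rc p2 / q2) := by
          rw [he2]
          nlinarith [mul_le_mul_of_nonneg_left h1 hμ0.le]
      _ ≤ Rc p / q := hsum
  · -- both zero: contradiction with Rc p / q < Rth
    exfalso
    have c1 : Rth * q1 ≤ Rc p1 := (le_div_iff₀ hq1).1 h1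
    have c2 : Rth * q2 ≤ Rc p2 := (le_div_iff₀ hq2).1 h2
    have hclt : Rc p < Rth * q := (div_lt_iff₀ hq).1 hc
    rw [hqdef] at hclt
    nlinarith [mul_le_mul_of_nonneg_left c1 ha, mul_le_mul_of_nonneg_left c2 hb]
end

section
/- Let a ≤ c ≤ d ≤ b be real numbers and let g : [a, b] → ℝ be continuous with g(x) ≥ 0 for all x ∈ [a, b], g(x) = 0 for all x ∈ [c, d], g convex on [a, c], and g convex on [d, b]. Then g is convex on [a, b]. -/
open Set

/-- Glue convexity on `[a,c]` with the zero function on `[c,d]`. -/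
lemma glueL (a c d : ℝ) (hac : a ≤ c) (hcd : c ≤ d) (g : ℝ → ℝ)
    (hnn : ∀ x ∈ Set.Icc a c, 0 ≤ g x)
    (hz : ∀ x ∈ Set.Icc c d, g x = 0)
    (h1 : ConvexOn ℝ (Set.Icc a c) g) : ConvexOn ℝ (Set.Icc a d) g := by
  apply convexOn_of_slope_mono_adjacent (convex_Icc a d)
  intro x y z hx hzm hxy hyz
  have hgx : 0 ≤ g x := by
    rcases le_or_gt x c with h | h
    · exact hnn x ⟨hx.1, h⟩
    · exact (hz x ⟨h.le, hx.2⟩).ge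
  rcases le_or_gt z c with hzc | hzc
  · exact h1.slope_mono_adjacent ⟨hx.1, by linarith⟩ ⟨by linarith [hx.1], hzc⟩ hxy hyz
  rcases le_or_gt c y with hcy | hyc
  · -- y ≥ c, so g y = g z = 0
    have gy : g y = 0 := hz y ⟨hcy, by linarith [hzm.2]⟩
    have gz : g z = 0 := hz z ⟨by linarith, hzm.2⟩
    rw [gy, gz]
    have h1' : (0 - g x) / (y - x) ≤ 0 :=
      div_nonpos_of_nonpos_of_nonneg (by linarith) (by linarith)
    simpa using h1'
  · -- y < c < z
    have gc : g c = 0 := hz c ⟨le_rfl, hcd⟩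
    have gz : g z = 0 := hz z ⟨hzc.le, hzm.2⟩
    have hay : a ≤ y := le_trans hx.1 hxy.le
    have gy : 0 ≤ g y := hnn y ⟨hay, hyc.le⟩
    have step1 : (g y - g x) / (y - x) ≤ (g c - g y) / (c - y) :=
      h1.slope_mono_adjacent ⟨hx.1, by linarith⟩ ⟨by linarith, le_rfl⟩ hxy hyc
    rw [gc] at step1
    rw [gz]
    have step2 : (0 - g y) / (c - y) ≤ (0 - g y) / (z - y) := by
      rw [div_le_div_iff₀ (by linarith) (by linarith)]
      nlinarith
    linarith

/-- Glue the zero function on `[c,d]` with convexity on `[d,b]`. -/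
lemma glueR (c d b : ℝ) (hcd : c ≤ d) (hdb : d ≤ b) (g : ℝ → ℝ)
    (hnn : ∀ x ∈ Set.Icc d b, 0 ≤ g x)
    (hz : ∀ x ∈ Set.Icc c d, g x = 0)
    (h2 : ConvexOn ℝ (Set.Icc d b) g) : ConvexOn ℝ (Set.Icc c b) g := by
  apply convexOn_of_slope_mono_adjacent (convex_Icc c b)
  intro x y z hx hzm hxy hyz
  have hgz : 0 ≤ g z := by
    rcases le_or_gt d z with h | h
    · exact hnn z ⟨h, hzm.2⟩
    · exact (hz z ⟨hzm.1, h.le⟩).ge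
  rcases le_or_gt d x with hdx | hdx
  · exact h2.slope_mono_adjacent ⟨hdx, by linarith [hzm.2]⟩ ⟨by linarith, hzm.2⟩ hxy hyz
  rcases le_or_gt y d with hyd | hyd
  · -- y ≤ d, so g x = g y = 0
    have gx : g x = 0 := hz x ⟨hx.1, by linarith⟩
    have gy : g y = 0 := hz y ⟨by linarith [hx.1], hyd⟩
    rw [gx, gy]
    have h1' : 0 ≤ (g z - 0) / (z - y) :=
      div_nonneg (by linarith) (by linarith)
    simpa using h1'
  · -- x < d < y
    have gd : g d = 0 := hz d ⟨hcd, le_rfl⟩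
    have gx : g x = 0 := hz x ⟨hx.1, hdx.le⟩
    have hyb : y ≤ b := le_trans hyz.le hzm.2
    have gy : 0 ≤ g y := hnn y ⟨hyd.le, hyb⟩
    have step1 : (g y - g d) / (y - d) ≤ (g z - g y) / (z - y) :=
      h2.slope_mono_adjacent ⟨le_rfl, by linarith⟩ ⟨by linarith, hzm.2⟩ hyd hyz
    rw [gd] at step1
    rw [gx]
    have step2 : (g y - 0) / (y - x) ≤ (g y - 0) / (y - d) := by
      rw [div_le_div_iff₀ (by linarith) (by linarith)]
      nlinarith
    linarith [step2]

/-- One-dimensional gluing lemma. If `a ≤ c ≤ d ≤ b`,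
`g` is continuous and nonnegative on `[a, b]`, vanishes on `[c, d]`, and is
convex on `[a, c]` and on `[d, b]`, then `g` is convex on `[a, b]`. -/
theorem stmt2
    (a b c d : ℝ) (hac : a ≤ c) (hcd : c ≤ d) (hdb : d ≤ b)
    (g : ℝ → ℝ)
    (hcont : ContinuousOn g (Set.Icc a b))
    (hnonneg : ∀ x ∈ Set.Icc a b, 0 ≤ g x)
    (hzero : ∀ x ∈ Set.Icc c d, g x = 0)
    (hconv1 : ConvexOn ℝ (Set.Icc a c) g)
    (hconv2 : ConvexOn ℝ (Set.Icc d b) g) :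
    ConvexOn ℝ (Set.Icc a b) g := by
  have hL : ConvexOn ℝ (Set.Icc a d) g :=
    glueL a c d hac hcd g (fun x hx => hnonneg x ⟨hx.1, le_trans hx.2 (hcd.trans hdb)⟩)
      hzero hconv1
  have hR : ConvexOn ℝ (Set.Icc c b) g :=
    glueR c d b hcd hdb g (fun x hx => hnonneg x ⟨le_trans (hac.trans hcd) hx.1, hx.2⟩)
      hzero hconv2
  apply convexOn_of_slope_mono_adjacent (convex_Icc a b)
  intro x y z hx hzm hxy hyz
  have hgx : 0 ≤ g x := hnonneg x hx
  have hgy : 0 ≤ g y := hnonneg y ⟨le_trans hx.1 hxy.le, le_trans hyz.le hzm.2⟩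
  have hgz : 0 ≤ g z := hnonneg z hzm
  rcases le_or_gt z d with hzd | hzd
  · exact hL.slope_mono_adjacent ⟨hx.1, by linarith⟩ ⟨by linarith [hx.1], hzd⟩ hxy hyz
  rcases le_or_gt c x with hcx | hcx
  · exact hR.slope_mono_adjacent ⟨hcx, by linarith [hzm.2]⟩ ⟨by linarith, hzm.2⟩ hxy hyz
  -- x < c and d < z
  rcases lt_or_ge y d with hyd | hdy
  · -- y < d : compare slope(x,y) ≤ slope(y,d) ≤ slope(y,z)
    have gd : g d = 0 := hzero d ⟨hcd, le_rfl⟩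
    have step1 : (g y - g x) / (y - x) ≤ (g d - g y) / (d - y) :=
      hL.slope_mono_adjacent ⟨hx.1, by linarith⟩ ⟨by linarith [hx.1], le_rfl⟩ hxy hyd
    rw [gd] at step1
    have step2 : (0 - g y) / (d - y) ≤ (g z - g y) / (z - y) := by
      rw [div_le_div_iff₀ (by linarith) (by linarith)]
      nlinarith
    linarith
  · -- d ≤ y
    rcases eq_or_lt_of_le (hcd.trans hdy : c ≤ y) with hceq | hcy
    · -- c = y (so c = d = y), g y = 0
      have gy : g y = 0 := hzero y ⟨hceq.le, hceq ▸ hcd⟩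
      rw [gy]
      have h1' : (0 - g x) / (y - x) ≤ 0 :=
        div_nonpos_of_nonpos_of_nonneg (by linarith) (by linarith)
      have h2' : 0 ≤ (g z - 0) / (z - y) :=
        div_nonneg (by linarith) (by linarith)
      linarith
    · -- c < y : compare slope(x,y) ≤ slope(c,y) ≤ slope(y,z)
      have gc : g c = 0 := hzero c ⟨le_rfl, hcd⟩
      have step1 : (g y - g c) / (y - c) ≤ (g z - g y) / (z - y) :=
        hR.slope_mono_adjacent ⟨le_rfl, by linarith [hzm.2]⟩ ⟨by linarith, hzm.2⟩ hcy hyz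
      rw [gc] at step1
      have step2 : (g y - g x) / (y - x) ≤ (g y - 0) / (y - c) := by
        rw [div_le_div_iff₀ (by linarith) (by linarith)]
        nlinarith
      linarith
end

section
/- Let σ > 0 and N > 0. The function f(p, q) := σ² · q · (1 + p/N)^(−1/q) is convex on the set {(p, q) ∈ ℝ² : p > 0, q > 0}. -/
open Set

private lemma exp_aux (t1 t2 w1 w2 : ℝ) (h1 : 0 ≤ w1) (h2 : 0 ≤ w2) (h : w1 + w2 = 1) :
    Real.exp (w1 * t1 + w2 * t2) ≤ w1 * Real.exp t1 + w2 * Real.exp t2 := by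
  simpa using convexOn_exp.2 (Set.mem_univ t1) (Set.mem_univ t2) h1 h2 h

/-- For `σ, N > 0`, the Gaussian weighted distortion
`f(p, q) = σ² · q · (1 + p/N) ^ (−1/q)` is convex on `{(p, q) : p > 0, q > 0}`. -/
theorem stmt3 (σ N : ℝ) (hσ : 0 < σ) (hN : 0 < N) :
    ConvexOn ℝ (Set.Ioi (0 : ℝ) ×ˢ Set.Ioi (0 : ℝ))
      (fun x : ℝ × ℝ => σ ^ 2 * x.2 * (1 + x.1 / N) ^ (-(1 / x.2))) := by
  constructor
  · exact (convex_Ioi 0).prod (convex_Ioi 0)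
  rintro ⟨p1, q1⟩ ⟨hp1, hq1⟩ ⟨p2, q2⟩ ⟨hp2, hq2⟩ a b ha hb hab
  simp only [Prod.smul_mk, Prod.mk_add_mk, smul_eq_mul]
  simp only [Set.mem_Ioi] at hp1 hq1 hp2 hq2
  rcases ha.eq_or_lt with rfl | ha'
  · have hb1 : b = 1 := by linarith
    subst hb1; norm_num
  rcases hb.eq_or_lt with rfl | hb'
  · have ha1 : a = 1 := by linarith
    subst ha1; norm_num
  set u1 : ℝ := 1 + p1 / N with hu1def
  set u2 : ℝ := 1 + p2 / N with hu2def
  have hu1 : 0 < u1 := by positivity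
  have hu2 : 0 < u2 := by positivity
  set Q : ℝ := a * q1 + b * q2 with hQdef
  have hQ : 0 < Q := by positivity
  have hup : 1 + (a * p1 + b * p2) / N = a * u1 + b * u2 := by
    have h : a * u1 + b * u2 = (a + b) + (a * p1 + b * p2) / N := by
      rw [hu1def, hu2def]; field_simp; ring
    rw [h, hab]
  have hupos : (0:ℝ) < a * u1 + b * u2 := by positivity
  have hlog : a * Real.log u1 + b * Real.log u2 ≤ Real.log (a * u1 + b * u2) := by
    have := (strictConcaveOn_log_Ioi).concaveOn.2 (Set.mem_Ioi.2 hu1) (Set.mem_Ioi.2 hu2)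
      ha hb hab
    simpa using this
  have hw : a * q1 / Q + b * q2 / Q = 1 := by field_simp; exact hQdef.symm
  have hE := exp_aux (Real.log u1 * (-(1/q1))) (Real.log u2 * (-(1/q2)))
      (a * q1 / Q) (b * q2 / Q) (by positivity) (by positivity) hw
  have harg : (a * q1 / Q) * (Real.log u1 * (-(1/q1))) + (b * q2 / Q) * (Real.log u2 * (-(1/q2)))
      = -((a * Real.log u1 + b * Real.log u2) / Q) := by
    field_simp; ring
  rw [harg] at hE
  have hexpo : Real.log (a * u1 + b * u2) * (-(1/Q)) ≤ -((a * Real.log u1 + b * Real.log u2) / Q) := by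
    rw [show Real.log (a * u1 + b * u2) * (-(1/Q)) = -(Real.log (a * u1 + b * u2) / Q) by ring,
      neg_le_neg_iff]
    gcongr
  have hE' : Real.exp (Real.log (a * u1 + b * u2) * (-(1/Q)))
      ≤ (a * q1 / Q) * Real.exp (Real.log u1 * (-(1/q1)))
        + (b * q2 / Q) * Real.exp (Real.log u2 * (-(1/q2))) :=
    (Real.exp_le_exp.2 hexpo).trans hE
  rw [hup, Real.rpow_def_of_pos hupos, Real.rpow_def_of_pos hu1, Real.rpow_def_of_pos hu2]
  calc σ ^ 2 * Q * Real.exp (Real.log (a * u1 + b * u2) * (-(1/Q)))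
      ≤ σ ^ 2 * Q * ((a * q1 / Q) * Real.exp (Real.log u1 * (-(1/q1)))
        + (b * q2 / Q) * Real.exp (Real.log u2 * (-(1/q2)))) := by
        exact mul_le_mul_of_nonneg_left hE' (by positivity)
    _ = a * (σ ^ 2 * q1 * Real.exp (Real.log u1 * (-(1/q1))))
        + b * (σ ^ 2 * q2 * Real.exp (Real.log u2 * (-(1/q2)))) := by
        field_simp
end

section
/- Let 0 < D_max < ∞ and let R_s : (0, D_max) → ℝ be twice differentiable with R_s(D) > 0, R_s′(D) < 0, and R_s″(D) > 0 for all D ∈ (0, D_max). Suppose R_s(D)/R_s′(D) → β_max as D → 0⁺ and R_s(D)/R_s′(D) − D → β_min as D → D_max⁻. Then for every β with β_min < β < β_max there exists a unique D ∈ (0, D_max) satisfying R_s(D)/R_s′(D) − D = β. -/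
open Set Filter

/-- Lemma 2 of the paper: With `0 < Dmax < ∞`, if `Rs` is twice
differentiable on `(0, Dmax)` with `Rs > 0`, `Rs' < 0`, `Rs'' > 0` there,
`Rs/Rs' → βmax` as `D → 0⁺` and `Rs/Rs' − D → βmin` as `D → Dmax⁻`, then for
every `β ∈ (βmin, βmax)` there is a unique `D ∈ (0, Dmax)` with
`Rs(D)/Rs'(D) − D = β`. -/
theorem stmt5
    (Dmax : ℝ) (hDmax : 0 < Dmax)
    (Rs : ℝ → ℝ)
    (hdiff : ∀ d ∈ Set.Ioo 0 Dmax, DifferentiableAt ℝ Rs d)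
    (hdiff2 : ∀ d ∈ Set.Ioo 0 Dmax, DifferentiableAt ℝ (deriv Rs) d)
    (hRsPos : ∀ d ∈ Set.Ioo 0 Dmax, 0 < Rs d)
    (hRs' : ∀ d ∈ Set.Ioo 0 Dmax, deriv Rs d < 0)
    (hRs'' : ∀ d ∈ Set.Ioo 0 Dmax, 0 < deriv (deriv Rs) d)
    (βmax βmin : ℝ)
    (hβmax : Tendsto (fun D : ℝ => Rs D / deriv Rs D)
      (nhdsWithin 0 (Set.Ioi 0)) (nhds βmax))
    (hβmin : Tendsto (fun D : ℝ => Rs D / deriv Rs D - D)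
      (nhdsWithin Dmax (Set.Iio Dmax)) (nhds βmin)) :
    ∀ β : ℝ, βmin < β → β < βmax →
      ∃! D : ℝ, D ∈ Set.Ioo 0 Dmax ∧ Rs D / deriv Rs D - D = β := by
  intro β hβ1 hβ2
  set g : ℝ → ℝ := fun D => Rs D / deriv Rs D - D with hg
  -- derivative of g is negative on the interval
  have hderiv : ∀ d ∈ Set.Ioo 0 Dmax, HasDerivAt g
      ((deriv Rs d * deriv Rs d - Rs d * deriv (deriv Rs) d) / (deriv Rs d) ^ 2 - 1) d := by
    intro d hd
    have h1 := (hdiff d hd).hasDerivAt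
    have h2 := (hdiff2 d hd).hasDerivAt
    have hne : deriv Rs d ≠ 0 := ne_of_lt (hRs' d hd)
    exact (h1.div h2 hne).sub (hasDerivAt_id d)
  have hderivneg : ∀ d ∈ Set.Ioo 0 Dmax,
      (deriv Rs d * deriv Rs d - Rs d * deriv (deriv Rs) d) / (deriv Rs d) ^ 2 - 1 < 0 := by
    intro d hd
    have hsq : (0:ℝ) < (deriv Rs d) ^ 2 :=
      pow_two_pos_of_ne_zero (ne_of_lt (hRs' d hd))
    have hnum : deriv Rs d * deriv Rs d - Rs d * deriv (deriv Rs) d < (deriv Rs d) ^ 2 := by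
      have : 0 < Rs d * deriv (deriv Rs) d := mul_pos (hRsPos d hd) (hRs'' d hd)
      nlinarith
    have := (div_lt_one hsq).mpr hnum
    linarith
  have hcont : ContinuousOn g (Set.Ioo 0 Dmax) := fun d hd =>
    ((hderiv d hd).continuousAt).continuousWithinAt
  have hanti : StrictAntiOn g (Set.Ioo 0 Dmax) := by
    apply strictAntiOn_of_deriv_neg (convex_Ioo 0 Dmax) hcont
    intro x hx
    rw [interior_Ioo] at hx
    rw [(hderiv x hx).deriv]
    exact hderivneg x hx
  -- g tends to βmax at 0⁺
  have hβmax' : Tendsto g (nhdsWithin 0 (Set.Ioi 0)) (nhds βmax) := by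
    have : Tendsto (fun D : ℝ => D) (nhdsWithin 0 (Set.Ioi 0)) (nhds 0) :=
      tendsto_id.mono_left nhdsWithin_le_nhds
    simpa using hβmax.sub this
  -- find a near 0 with g a > β
  have hne0 : (nhdsWithin (0:ℝ) (Set.Ioi 0)).NeBot := nhdsGT_neBot 0
  have hea : ∀ᶠ D in nhdsWithin (0:ℝ) (Set.Ioi 0), D ∈ Set.Ioo 0 Dmax ∧ β < g D := by
    have h1 : ∀ᶠ D in nhdsWithin (0:ℝ) (Set.Ioi 0), β < g D :=
      hβmax' (Ioi_mem_nhds hβ2)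
    have h2 : ∀ᶠ D in nhdsWithin (0:ℝ) (Set.Ioi 0), D ∈ Set.Ioo 0 Dmax :=
      Ioo_mem_nhdsGT_of_mem ⟨le_refl 0, hDmax⟩
    exact h2.and h1
  obtain ⟨a, haI, haβ⟩ := hea.exists
  -- find b near Dmax with g b < β
  have hneD : (nhdsWithin Dmax (Set.Iio Dmax)).NeBot := nhdsLT_neBot Dmax
  have heb : ∀ᶠ D in nhdsWithin Dmax (Set.Iio Dmax), D ∈ Set.Ioo 0 Dmax ∧ g D < β := by
    have h1 : ∀ᶠ D in nhdsWithin Dmax (Set.Iio Dmax), g D < β :=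
      hβmin (Iio_mem_nhds hβ1)
    have h2 : ∀ᶠ D in nhdsWithin Dmax (Set.Iio Dmax), D ∈ Set.Ioo 0 Dmax :=
      Ioo_mem_nhdsLT_of_mem ⟨hDmax, le_refl Dmax⟩
    exact h2.and h1
  obtain ⟨b, hbI, hbβ⟩ := heb.exists
  -- a < b
  have hab : a < b := by
    by_contra h
    push_neg at h
    rcases eq_or_lt_of_le h with h | h
    · rw [h] at hbβ; linarith
    · have := hanti hbI haI h; linarith
  have hsub : Set.Icc a b ⊆ Set.Ioo 0 Dmax := fun x hx =>
    ⟨lt_of_lt_of_le haI.1 hx.1, lt_of_le_of_lt hx.2 hbI.2⟩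
  have hcont' : ContinuousOn g (Set.Icc a b) := hcont.mono hsub
  have hiv : β ∈ g '' Set.Icc a b := by
    apply intermediate_value_Icc' (le_of_lt hab) hcont'
    exact ⟨le_of_lt hbβ, le_of_lt haβ⟩
  obtain ⟨D, hD, hDβ⟩ := hiv
  refine ⟨D, ⟨hsub hD, hDβ⟩, ?_⟩
  rintro D' ⟨hD'I, hD'β⟩
  have hD'g : g D' = β := hD'β
  exact hanti.injOn hD'I (hsub hD) (by rw [hD'g, hDβ])
end

section
/- Let σ, N > 0 and β ∈ ℝ. Suppose p₁, κ₁ > 0 and p₂, κ₂ > 0 both satisfy σ²·(1 + pᵢ/N)^(−κᵢ)·(1 + κᵢ·ln(1 + pᵢ/N)) + β = 0 for i = 1, 2. Then σ²·(1 + p₁/N)^(−κ₁) = σ²·(1 + p₂/N)^(−κ₂). -/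
private lemma aux_lt {a b : ℝ} (ha : 0 < a) (hab : a < b) :
    Real.exp (-b) * (1 + b) < Real.exp (-a) * (1 + a) := by
  have h1 : 1 + (b - a) < Real.exp (b - a) := by
    have := Real.add_one_lt_exp (show b - a ≠ 0 by linarith)
    linarith
  have h2 : (1 + (b - a)) * (1 + a) < Real.exp (b - a) * (1 + a) := by
    apply mul_lt_mul_of_pos_right h1; linarith
  have h3 : 1 + b < Real.exp (b - a) * (1 + a) := by nlinarith
  have h4 : Real.exp (b - a) = Real.exp (-a) / Real.exp (-b) := by
    rw [← Real.exp_sub]; ring_nf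
  have hb : 0 < Real.exp (-b) := Real.exp_pos _
  rw [h4] at h3
  calc Real.exp (-b) * (1 + b) < Real.exp (-b) * (Real.exp (-a) / Real.exp (-b) * (1 + a)) :=
        mul_lt_mul_of_pos_left h3 hb
    _ = Real.exp (-a) * (1 + a) := by field_simp

private lemma aux_inj {a b : ℝ} (ha : 0 < a) (hb : 0 < b)
    (h : Real.exp (-a) * (1 + a) = Real.exp (-b) * (1 + b)) : a = b := by
  rcases lt_trichotomy a b with hlt | he | hgt
  · exact absurd h (aux_lt ha hlt).ne'
  · exact he
  · exact absurd h (aux_lt hb hgt).ne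

/-- If two power/mismatch pairs `(p₁, κ₁)` and `(p₂, κ₂)` both
satisfy the local-optimality condition
`σ²(1+p/N)^(−κ)(1 + κ ln(1+p/N)) + β = 0` with the same `β`, then they produce
the same instantaneous distortion `σ²(1+p/N)^(−κ)`. -/
theorem stmt10 (σ N β p₁ κ₁ p₂ κ₂ : ℝ) (hσ : 0 < σ) (hN : 0 < N)
    (hp₁ : 0 < p₁) (hκ₁ : 0 < κ₁) (hp₂ : 0 < p₂) (hκ₂ : 0 < κ₂)
    (heq₁ : σ ^ 2 * (1 + p₁ / N) ^ (-κ₁) * (1 + κ₁ * Real.log (1 + p₁ / N)) + β = 0)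
    (heq₂ : σ ^ 2 * (1 + p₂ / N) ^ (-κ₂) * (1 + κ₂ * Real.log (1 + p₂ / N)) + β = 0) :
    σ ^ 2 * (1 + p₁ / N) ^ (-κ₁) = σ ^ 2 * (1 + p₂ / N) ^ (-κ₂) := by
  have hx₁ : (1:ℝ) < 1 + p₁ / N := by
    have := div_pos hp₁ hN; linarith
  have hx₂ : (1:ℝ) < 1 + p₂ / N := by
    have := div_pos hp₂ hN; linarith
  have hL₁ : 0 < Real.log (1 + p₁ / N) := Real.log_pos hx₁
  have hL₂ : 0 < Real.log (1 + p₂ / N) := Real.log_pos hx₂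
  have hr₁ : (1 + p₁ / N) ^ (-κ₁) = Real.exp (-(κ₁ * Real.log (1 + p₁ / N))) := by
    rw [Real.rpow_def_of_pos (by linarith)]; ring_nf
  have hr₂ : (1 + p₂ / N) ^ (-κ₂) = Real.exp (-(κ₂ * Real.log (1 + p₂ / N))) := by
    rw [Real.rpow_def_of_pos (by linarith)]; ring_nf
  set t₁ := κ₁ * Real.log (1 + p₁ / N) with ht₁def
  set t₂ := κ₂ * Real.log (1 + p₂ / N) with ht₂def
  have ht₁ : 0 < t₁ := mul_pos hκ₁ hL₁
  have ht₂ : 0 < t₂ := mul_pos hκ₂ hL₂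
  rw [hr₁] at heq₁ ⊢
  rw [hr₂] at heq₂ ⊢
  have hσ2 : (0:ℝ) < σ ^ 2 := by positivity
  have hkey : Real.exp (-t₁) * (1 + t₁) = Real.exp (-t₂) * (1 + t₂) := by
    have : σ ^ 2 * (Real.exp (-t₁) * (1 + t₁)) = σ ^ 2 * (Real.exp (-t₂) * (1 + t₂)) := by
      nlinarith [heq₁, heq₂]
    exact mul_left_cancel₀ (ne_of_gt hσ2) this
  rw [aux_inj ht₁ ht₂ hkey]
end

section
/- Let δ, λ > 0, let D̃ : (0, ∞) → ℝ be twice differentiable with D̃″(p) > 0 for all p > 0, and let C ∈ ℝ satisfy C < −λ·D̃(δ/λ). Let I ⊆ ℝ be an open interval and let p : I → ℝ be differentiable with p(z) > 0 for all z ∈ I and λ·D̃(p(z)) + (δ − λ·p(z))·D̃′(p(z)) + p(z)·p′(z)·D̃″(p(z)) + C = 0 for all z ∈ I. Then p′(z) > 0 for all z ∈ I; in particular p is strictly increasing on I. -/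
open Set

/-- Tangent line inequality for a function with monotone derivative on `(0,∞)`. -/
lemma tangent_le (Dt : ℝ → ℝ)
    (hdiff : ∀ q : ℝ, 0 < q → DifferentiableAt ℝ Dt q)
    (hmono : MonotoneOn (deriv Dt) (Ioi 0))
    {a b : ℝ} (ha : 0 < a) (hb : 0 < b) :
    Dt a + (b - a) * deriv Dt a ≤ Dt b := by
  rcases lt_trichotomy a b with h | h | h
  · obtain ⟨c, hc, hceq⟩ := exists_deriv_eq_slope Dt h
      (fun x hx => (hdiff x (lt_of_lt_of_le ha hx.1)).continuousAt.continuousWithinAt)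
      (fun x hx => (hdiff x (lt_trans ha hx.1)).differentiableWithinAt)
    have hca : deriv Dt a ≤ deriv Dt c :=
      hmono (mem_Ioi.2 ha) (mem_Ioi.2 (lt_trans ha hc.1)) hc.1.le
    rw [eq_div_iff (sub_ne_zero.2 h.ne')] at hceq
    nlinarith [sub_pos.2 h]
  · simp [h]
  · obtain ⟨c, hc, hceq⟩ := exists_deriv_eq_slope Dt h
      (fun x hx => (hdiff x (lt_of_lt_of_le hb hx.1)).continuousAt.continuousWithinAt)
      (fun x hx => (hdiff x (lt_trans hb hx.1)).differentiableWithinAt)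
    have hca : deriv Dt c ≤ deriv Dt a :=
      hmono (mem_Ioi.2 (lt_trans hb hc.1)) (mem_Ioi.2 ha) hc.2.le
    rw [eq_div_iff (sub_ne_zero.2 h.ne')] at hceq
    nlinarith [sub_pos.2 h]

/-- Remark 5 of the paper: For `δ, λ > 0`, a twice differentiable
strictly convex `D̃` on `(0, ∞)`, and `C < −λ·D̃(δ/λ)`, any differentiable
solution `p` of the ODE
`λ·D̃(p(z)) + (δ − λp(z))·D̃'(p(z)) + p(z)·p'(z)·D̃''(p(z)) + C = 0`
on an open interval `I` with `p > 0` on `I` has `p' > 0` on `I`; in particular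
`p` is strictly increasing on `I`. -/
theorem stmt14 (δ lam C : ℝ) (hδ : 0 < δ) (hlam : 0 < lam)
    (Dt : ℝ → ℝ)
    (hdiff : ∀ q : ℝ, 0 < q → DifferentiableAt ℝ Dt q)
    (hdiff2 : ∀ q : ℝ, 0 < q → DifferentiableAt ℝ (deriv Dt) q)
    (hconv : ∀ q : ℝ, 0 < q → 0 < deriv (deriv Dt) q)
    (hC : C < -(lam * Dt (δ / lam)))
    (I : Set ℝ) (hIopen : IsOpen I) (hIconv : Convex ℝ I)
    (p : ℝ → ℝ)
    (hpdiff : ∀ z ∈ I, DifferentiableAt ℝ p z)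
    (hppos : ∀ z ∈ I, 0 < p z)
    (hODE : ∀ z ∈ I,
      lam * Dt (p z) + (δ - lam * p z) * deriv Dt (p z)
        + p z * deriv p z * deriv (deriv Dt) (p z) + C = 0) :
    (∀ z ∈ I, 0 < deriv p z) ∧ StrictMonoOn p I := by
  -- `deriv Dt` is monotone on `(0,∞)`
  have hmono : MonotoneOn (deriv Dt) (Ioi 0) := by
    have := strictMonoOn_of_deriv_pos (convex_Ioi (0:ℝ))
      (f := deriv Dt)
      (fun x hx => (hdiff2 x hx).continuousAt.continuousWithinAt)
      (fun x hx => hconv x (by simpa [interior_Ioi] using hx))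
    exact this.monotoneOn
  have hb : 0 < δ / lam := div_pos hδ hlam
  have key : ∀ z ∈ I, 0 < deriv p z := by
    intro z hz
    have hpz := hppos z hz
    have htan := tangent_le Dt hdiff hmono hpz hb
    -- λ Dt (p z) + (δ - λ p z) * Dt' (p z) ≤ λ Dt (δ/λ)
    have hnum : lam * Dt (p z) + (δ - lam * p z) * deriv Dt (p z)
        ≤ lam * Dt (δ / lam) := by
      have h1 : (δ - lam * p z) = lam * (δ / lam - p z) := by
        field_simp
      rw [h1]
      nlinarith [htan]
    have hode := hODE z hz
    have hpos : 0 < p z * deriv p z * deriv (deriv Dt) (p z) := by linarith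
    have hD2 := hconv (p z) hpz
    by_contra hle
    push_neg at hle
    have : p z * deriv p z * deriv (deriv Dt) (p z) ≤ 0 :=
      mul_nonpos_of_nonpos_of_nonneg
        (mul_nonpos_of_nonneg_of_nonpos hpz.le hle) hD2.le
    linarith
  refine ⟨key, strictMonoOn_of_deriv_pos hIconv
    (fun z hz => (hpdiff z hz).continuousAt.continuousWithinAt)
    (fun z hz => key z (by rwa [hIopen.interior_eq] at hz))⟩
end

section
/- Let L > 0, δ > 0, λ > 0, π₀ ∈ ℝ, let w : (0, L] → (0, ∞) be continuous with u ↦ 1/w(u) integrable on (0, L], and let f : (0, L] → ℝ be continuous such that u ↦ e^{λu}·f(u) is integrable on (0, L] and f(z)·w(z) = δ·e^{−λz}·(π₀ + ∫₀^z e^{λu}·f(u) du) for every z ∈ (0, L]. Then f(z) = π₀ · (δ·e^{−λz}/w(z)) · exp(δ·∫₀^z du/w(u)) for every z ∈ (0, L]. -/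
open Set MeasureTheory Topology Filter

/-- Explicit solution of the stationarity (level-crossing) integral
equation for the stationary battery density. If on `(0, L]` the continuous
functions `f` and `w > 0` satisfy
`f(z)·w(z) = δ·e^{−λz}·(π₀ + ∫₀^z e^{λu} f(u) du)`, with `1/w` and
`u ↦ e^{λu} f(u)` integrable on `(0, L]`, then
`f(z) = π₀ · (δ e^{−λz}/w(z)) · exp(δ ∫₀^z du/w(u))` for every `z ∈ (0, L]`. -/
theorem stmt15 (L δ lam π₀ : ℝ) (hL : 0 < L) (hδ : 0 < δ) (hlam : 0 < lam)
    (w f : ℝ → ℝ)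
    (hwcont : ContinuousOn w (Set.Ioc 0 L))
    (hwpos : ∀ u ∈ Set.Ioc 0 L, 0 < w u)
    (hwint : IntegrableOn (fun u => 1 / w u) (Set.Ioc 0 L))
    (hfcont : ContinuousOn f (Set.Ioc 0 L))
    (hfint : IntegrableOn (fun u => Real.exp (lam * u) * f u) (Set.Ioc 0 L))
    (heq : ∀ z ∈ Set.Ioc 0 L,
      f z * w z = δ * Real.exp (-lam * z) *
        (π₀ + ∫ u in Set.Ioc 0 z, Real.exp (lam * u) * f u)) :
    ∀ z ∈ Set.Ioc 0 L,
      f z = π₀ * (δ * Real.exp (-lam * z) / w z) *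
        Real.exp (δ * ∫ u in Set.Ioc 0 z, 1 / w u) := by
  set g : ℝ → ℝ := fun u => Real.exp (lam * u) * f u with hgdef
  set h : ℝ → ℝ := fun u => 1 / w u with hhdef
  have hgIcc : IntegrableOn g (Icc 0 L) :=
    (integrableOn_Icc_iff_integrableOn_Ioc).2 hfint
  have hhIcc : IntegrableOn h (Icc 0 L) :=
    (integrableOn_Icc_iff_integrableOn_Ioc).2 hwint
  set F : ℝ → ℝ := fun z => ∫ u in Ioc 0 z, g u with hFdef
  set P : ℝ → ℝ := fun z => ∫ u in Ioc 0 z, h u with hPdef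
  have hFcont : ContinuousOn F (Icc 0 L) := intervalIntegral.continuousOn_primitive hgIcc
  have hPcont : ContinuousOn P (Icc 0 L) := intervalIntegral.continuousOn_primitive hhIcc
  set K : ℝ → ℝ := fun z => (π₀ + F z) * Real.exp (-(δ * P z)) with hKdef
  have hKcont : ContinuousOn K (Icc 0 L) :=
    (continuousOn_const.add hFcont).mul
      (Real.continuous_exp.comp_continuousOn (continuousOn_const.mul hPcont).neg)
  -- continuity of g and h at interior points
  have hgCt : ∀ x ∈ Ioo (0:ℝ) L, ContinuousAt g x := by
    intro x hx
    have hfx : ContinuousAt f x := hfcont.continuousAt (Ioc_mem_nhds hx.1 hx.2)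
    exact ((Real.continuous_exp.comp (continuous_const.mul continuous_id)).continuousAt).mul hfx
  have hhCt : ∀ x ∈ Ioo (0:ℝ) L, ContinuousAt h x := by
    intro x hx
    have hwx : ContinuousAt w x := hwcont.continuousAt (Ioc_mem_nhds hx.1 hx.2)
    exact continuousAt_const.div hwx (hwpos x ⟨hx.1, hx.2.le⟩).ne'
  -- derivatives at interior points
  have hFderiv : ∀ x ∈ Ioo (0:ℝ) L, HasDerivAt F (g x) x := by
    intro x hx
    have hint : IntervalIntegrable g volume 0 x :=
      (intervalIntegrable_iff_integrableOn_Ioc_of_le hx.1.le).2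
        (hfint.mono_set (Ioc_subset_Ioc le_rfl hx.2.le))
    have hmeas : StronglyMeasurableAtFilter g (𝓝 x) :=
      ContinuousAt.stronglyMeasurableAtFilter isOpen_Ioo hgCt x hx
    have hd := intervalIntegral.integral_hasDerivAt_right hint hmeas (hgCt x hx)
    refine hd.congr_of_eventuallyEq ?_
    filter_upwards [Ioi_mem_nhds hx.1] with y hy
    rw [hFdef]
    exact (intervalIntegral.integral_of_le (le_of_lt hy)).symm
  have hPderiv : ∀ x ∈ Ioo (0:ℝ) L, HasDerivAt P (h x) x := by
    intro x hx
    have hint : IntervalIntegrable h volume 0 x :=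
      (intervalIntegrable_iff_integrableOn_Ioc_of_le hx.1.le).2
        (hwint.mono_set (Ioc_subset_Ioc le_rfl hx.2.le))
    have hmeas : StronglyMeasurableAtFilter h (𝓝 x) :=
      ContinuousAt.stronglyMeasurableAtFilter isOpen_Ioo hhCt x hx
    have hd := intervalIntegral.integral_hasDerivAt_right hint hmeas (hhCt x hx)
    refine hd.congr_of_eventuallyEq ?_
    filter_upwards [Ioi_mem_nhds hx.1] with y hy
    rw [hPdef]
    exact (intervalIntegral.integral_of_le (le_of_lt hy)).symm
  -- the key algebraic identity from the integral equation
  have hkey : ∀ x ∈ Ioc (0:ℝ) L, g x = δ * (π₀ + F x) * h x := by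
    intro x hx
    have hwx : w x ≠ 0 := (hwpos x hx).ne'
    have h1 := heq x hx
    have hexp : Real.exp (lam * x) * Real.exp (-lam * x) = 1 := by
      rw [← Real.exp_add]; ring_nf; exact Real.exp_zero
    have h2 : g x * w x = δ * (π₀ + F x) := by
      calc g x * w x = Real.exp (lam * x) * (f x * w x) := by
            simp only [hgdef]; ring
        _ = Real.exp (lam * x) * (δ * Real.exp (-lam * x)
              * (π₀ + ∫ u in Ioc 0 x, g u)) := by rw [h1]
        _ = (Real.exp (lam * x) * Real.exp (-lam * x))
              * (δ * (π₀ + ∫ u in Ioc 0 x, g u)) := by ring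
        _ = δ * (π₀ + F x) := by rw [hexp]; ring
    have : g x = δ * (π₀ + F x) * (1 / w x) := by
      field_simp
      linarith [h2]
    simpa only [hhdef] using this
  -- K has zero derivative at interior points
  have hKderiv : ∀ x ∈ Ioo (0:ℝ) L, HasDerivAt K 0 x := by
    intro x hx
    have hE : HasDerivAt (fun z => Real.exp (-(δ * P z)))
        (Real.exp (-(δ * P x)) * (-(δ * h x))) x :=
      (((hPderiv x hx).const_mul δ).neg).exp
    have hG : HasDerivAt (fun z => π₀ + F z) (g x) x :=
      (hFderiv x hx).const_add π₀
    have hK' := hG.mul hE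
    have heq0 : g x * Real.exp (-(δ * P x))
        + (π₀ + F x) * (Real.exp (-(δ * P x)) * (-(δ * h x))) = 0 := by
      rw [hkey x ⟨hx.1, hx.2.le⟩]; ring
    rw [heq0] at hK'
    exact hK'
  -- K is constant on (0, L]
  intro z hz
  have hK0 : K 0 = π₀ := by
    simp only [hKdef, hFdef, hPdef, Ioc_self, Measure.restrict_empty,
      integral_zero_measure, add_zero, mul_zero, neg_zero, Real.exp_zero, mul_one]
  have hconst : ∀ ε ∈ Ioo (0:ℝ) z, K z = K ε := by
    intro ε hε
    have hsub : Icc ε z ⊆ Icc 0 L := Icc_subset_Icc hε.1.le hz.2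
    refine constant_of_has_deriv_right_zero (hKcont.mono hsub) ?_ z (right_mem_Icc.2 hε.2.le)
    intro x hx
    exact (hKderiv x ⟨lt_of_lt_of_le hε.1 hx.1, lt_of_lt_of_le hx.2 hz.2⟩).hasDerivWithinAt
  have hKz : K z = π₀ := by
    have hne : (𝓝[Ioo (0:ℝ) z] 0).NeBot := left_nhdsWithin_Ioo_neBot hz.1
    have hsub : Ioo (0:ℝ) z ⊆ Icc 0 L := fun x hx => ⟨hx.1.le, hx.2.le.trans hz.2⟩
    have ht1 : Filter.Tendsto K (𝓝[Ioo (0:ℝ) z] 0) (𝓝 (K 0)) :=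
      ((hKcont 0 (left_mem_Icc.2 hL.le)).mono hsub).tendsto
    have ht2 : Filter.Tendsto K (𝓝[Ioo (0:ℝ) z] 0) (𝓝 (K z)) := by
      refine Filter.Tendsto.congr' ?_ tendsto_const_nhds
      filter_upwards [self_mem_nhdsWithin] with ε hε
      exact hconst ε hε
    rw [← hK0]
    exact tendsto_nhds_unique ht2 ht1
  -- conclude
  have hGz : π₀ + F z = π₀ * Real.exp (δ * P z) := by
    have hKz' : (π₀ + F z) * Real.exp (-(δ * P z)) = π₀ := hKz
    have : (π₀ + F z) * Real.exp (-(δ * P z)) * Real.exp (δ * P z)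
        = π₀ * Real.exp (δ * P z) := by rw [hKz']
    rwa [mul_assoc, ← Real.exp_add, neg_add_cancel, Real.exp_zero, mul_one] at this
  have hwz : w z ≠ 0 := (hwpos z hz).ne'
  have h1 : f z * w z = δ * Real.exp (-lam * z) * (π₀ + F z) := heq z hz
  rw [hGz] at h1
  show f z = π₀ * (δ * Real.exp (-lam * z) / w z) * Real.exp (δ * P z)
  rw [neg_mul] at h1 ⊢
  field_simp
  linarith [h1]
end

section
/- Let σ, N, δ, λ, L > 0 and set P̄ := (δ/λ)·(1 − e^{−λL}). Let (Ω, 𝔉, μ) be a probability space and let p, κ : Ω → ℝ be measurable with p(ω) ≥ 0 and κ(ω) > 0 for μ-almost every ω, p integrable, 1/κ integrable with ∫ (1/κ) dμ = 1, ∫ p dμ ≤ P̄, and ω ↦ (σ²/κ(ω))·(1 + p(ω)/N)^(−κ(ω)) integrable. Then ∫ (σ²/κ(ω))·(1 + p(ω)/N)^(−κ(ω)) dμ(ω) ≥ σ²·(1 + P̄/N)^(−1). -/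
open Set MeasureTheory

lemma aux17 (T t k : ℝ) (hT : 0 < T) (ht : 0 ≤ t) (hk : 0 < k) :
    1 / k * (1 + t) ^ (-k : ℝ) ≥
      (1 + T)⁻¹ + (1 + T)⁻¹ * (1 + Real.log (1 + T)) * (1 / k - 1)
        - (1 + T)⁻¹ ^ 2 * (t - T) := by
  have h1t : (0:ℝ) < 1 + t := by linarith
  have h1T : (0:ℝ) < 1 + T := by linarith
  set A := (1 + T)⁻¹ with hA
  set S := Real.log (1 + T) with hS
  set s := Real.log (1 + t) with hs
  have hApos : 0 < A := inv_pos.mpr h1T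
  have hrw : (1 + t) ^ (-k : ℝ) = Real.exp (-(k * s)) := by
    rw [Real.rpow_def_of_pos h1t, hs]; ring_nf
  have hexpS : Real.exp (-S) = A := by
    rw [Real.exp_neg, Real.exp_log h1T]
  have he : Real.exp (-(k * s)) ≥ A * (1 + (S - k * s)) := by
    have h1 : Real.exp (-(k*s)) = Real.exp (-S) * Real.exp (S - k*s) := by
      rw [← Real.exp_add]; ring_nf
    have h2 := Real.add_one_le_exp (S - k * s)
    rw [h1, hexpS]
    have := mul_le_mul_of_nonneg_left h2 hApos.le
    linarith [this]
  have hlog : s ≤ S + (t - T) * A := by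
    have hdiv : Real.log ((1 + t) / (1 + T)) ≤ (1 + t) / (1 + T) - 1 :=
      Real.log_le_sub_one_of_pos (by positivity)
    have hld : Real.log ((1 + t) / (1 + T)) = s - S := by
      rw [Real.log_div h1t.ne' h1T.ne']
    have : (1 + t) / (1 + T) - 1 = (t - T) * A := by
      rw [hA]; field_simp; ring
    linarith [hdiv, hld.symm.le, this.le]
  have hk' : 0 < 1 / k := by positivity
  have step1 : 1 / k * (1 + t) ^ (-k : ℝ) ≥ 1 / k * (A * (1 + (S - k * s))) := by
    rw [hrw]
    exact mul_le_mul_of_nonneg_left he hk'.le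
  have hkk : k * (1 / k) = 1 := by field_simp
  have hexpand : 1 / k * (A * (1 + (S - k * s)))
      = A + A * (1 + S) * (1 / k - 1) - A ^ 2 * (t - T)
        + A * ((S + (t - T) * A) - s) := by
    field_simp
    ring
  have hnn : 0 ≤ A * ((S + (t - T) * A) - s) := by
    apply mul_nonneg hApos.le; linarith
  linarith [step1, hexpand.le, hexpand.ge, hnn]

/-- Gaussian distortion lower bound (equation (75) of the paper).
With `P̄ = (δ/λ)(1 − e^{−λL})`, if the power `p ≥ 0` and mismatch factor `κ > 0`
satisfy `∫ (1/κ) dμ = 1` and `∫ p dμ ≤ P̄`, then the average weighted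
distortion satisfies `∫ (σ²/κ)(1 + p/N)^(−κ) dμ ≥ σ²(1 + P̄/N)⁻¹`. -/
theorem stmt17
    (σ N δ lam L : ℝ) (hσ : 0 < σ) (hN : 0 < N) (hδ : 0 < δ)
    (hlam : 0 < lam) (hL : 0 < L)
    (Pbar : ℝ) (hPbar : Pbar = δ / lam * (1 - Real.exp (-lam * L)))
    {Ω : Type*} [MeasurableSpace Ω] (μ : Measure Ω) [IsProbabilityMeasure μ]
    (p κ : Ω → ℝ) (hpmeas : Measurable p) (hκmeas : Measurable κ)
    (hp0 : ∀ᵐ ω ∂μ, 0 ≤ p ω) (hκ0 : ∀ᵐ ω ∂μ, 0 < κ ω)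
    (hpint : Integrable p μ)
    (hκint : Integrable (fun ω => 1 / κ ω) μ)
    (hκ1 : ∫ ω, 1 / κ ω ∂μ = 1)
    (hpP : ∫ ω, p ω ∂μ ≤ Pbar)
    (hDint : Integrable
      (fun ω => σ ^ 2 / κ ω * (1 + p ω / N) ^ (-κ ω)) μ) :
    (∫ ω, σ ^ 2 / κ ω * (1 + p ω / N) ^ (-κ ω) ∂μ) ≥
      σ ^ 2 * (1 + Pbar / N)⁻¹ := by
  have hPpos : 0 < Pbar := by
    rw [hPbar]
    have : Real.exp (-lam * L) < 1 := by
      rw [Real.exp_lt_one_iff]; nlinarith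
    have h1 : 0 < δ / lam := by positivity
    nlinarith
  set T : ℝ := Pbar / N with hTdef
  have hT : 0 < T := by positivity
  have h1T : (0:ℝ) < 1 + T := by linarith
  set A : ℝ := (1 + T)⁻¹ with hAdef
  set B : ℝ := A * (1 + Real.log (1 + T)) with hBdef
  have hApos : 0 < A := inv_pos.mpr h1T
  -- constants for the linear lower bound
  set a : ℝ := σ ^ 2 * (A - B + A ^ 2 * T) with hadef
  set b : ℝ := σ ^ 2 * B with hbdef
  set c : ℝ := -(σ ^ 2 * A ^ 2 / N) with hcdef
  set g : Ω → ℝ := fun ω => a + b * (1 / κ ω) + c * p ω with hgdef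
  have hgint : Integrable g μ := by
    apply Integrable.add
    · exact (integrable_const a).add (hκint.const_mul b)
    · exact hpint.const_mul c
  have hae : ∀ᵐ ω ∂μ, g ω ≤ σ ^ 2 / κ ω * (1 + p ω / N) ^ (-κ ω) := by
    filter_upwards [hp0, hκ0] with ω hp hκ
    have ht : 0 ≤ p ω / N := by positivity
    have key := aux17 T (p ω / N) (κ ω) hT ht hκ
    have hmul := mul_le_mul_of_nonneg_left key (by positivity : (0:ℝ) ≤ σ ^ 2)
    have hL : σ ^ 2 * (1 / κ ω * (1 + p ω / N) ^ (-κ ω))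
        = σ ^ 2 / κ ω * (1 + p ω / N) ^ (-κ ω) := by ring
    have hR : σ ^ 2 * (A + B * (1 / κ ω - 1) - A ^ 2 * (p ω / N - T)) = g ω := by
      simp only [hgdef, hadef, hbdef, hcdef]
      field_simp
      ring
    rw [hL, ← hBdef] at hmul
    linarith [hmul, hR.le, hR.ge]
  have hint_le : ∫ ω, g ω ∂μ ≤ ∫ ω, σ ^ 2 / κ ω * (1 + p ω / N) ^ (-κ ω) ∂μ :=
    integral_mono_ae hgint hDint hae
  have hi1 : Integrable (fun ω => b * (1 / κ ω)) μ := hκint.const_mul b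
  have hi2 : Integrable (fun ω => c * p ω) μ := hpint.const_mul c
  have hi12 : Integrable (fun ω => a + b * (1 / κ ω)) μ := (integrable_const a).add hi1
  have hgval : ∫ ω, g ω ∂μ = a + b + c * ∫ ω, p ω ∂μ := by
    rw [hgdef]
    rw [integral_add hi12 hi2, integral_add (integrable_const a) hi1,
      integral_const, integral_const_mul, integral_const_mul, hκ1]
    simp
  have hc : c ≤ 0 := by
    have : 0 ≤ σ ^ 2 * A ^ 2 / N := by positivity
    rw [hcdef]; linarith
  have hcP : c * ∫ ω, p ω ∂μ ≥ c * Pbar := mul_le_mul_of_nonpos_left hpP hc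
  have hfinal : a + b + c * Pbar = σ ^ 2 * A := by
    rw [hadef, hbdef, hcdef, hTdef]
    field_simp
    ring
  have hgoal : σ ^ 2 * (1 + Pbar / N)⁻¹ = σ ^ 2 * A := by
    rw [hAdef, hTdef]
  rw [ge_iff_le, hgoal]
  linarith [hint_le, hgval.le, hgval.ge, hcP, hfinal.le, hfinal.ge]
end
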